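/- Let L be a normal modal logic, let φ and ψ be ML-formulas, and let σ = sig(φ) ∩ sig(ψ). Then the following are equivalent: (1) there does not exist an L-interpolant for φ and ψ; (2) there exist Kripke models M1, M2 that are models for L and worlds w1 of M1 and w2 of M2 such that M1,w1 ⊨ φ, M2,w2 ⊨ ¬ψ, and M1,w1 ∼_{ML(σ)} M2,w2 (w1 and w2 are σ-bisimilar). -/

import Mathlib

/-- Formulas of propositional modal logic ML, built from propositional
variables (indexed by `ℕ`) using `⊤`, `∧`, `¬` and `◇`. -/
inductive ML : Type
  | top : ML
  | var : ℕ → ML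
  | and : ML → ML → ML
  | not : ML → ML
  | dia : ML → ML

/-- `□φ` abbreviates `¬◇¬φ`. -/
def ML.box (φ : ML) : ML := .not (.dia (.not φ))

/-- `φ → ψ` as an abbreviation. -/
def ML.impl (φ ψ : ML) : ML := .not (.and φ (.not ψ))

/-- The signature of a formula: the set of propositional variables occurring in it. -/
def ML.sig : ML → Set ℕ
  | .top => ∅
  | .var p => {p}
  | .and φ ψ => φ.sig ∪ ψ.sig
  | .not φ => φ.sig
  | .dia φ => φ.sig

/-- Uniform substitution of formulas for propositional variables. -/
def ML.subst (s : ℕ → ML) : ML → ML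
  | .top => .top
  | .var p => s p
  | .and φ ψ => .and (φ.subst s) (ψ.subst s)
  | .not φ => .not (φ.subst s)
  | .dia φ => .dia (φ.subst s)

/-- A Kripke model: a nonempty set of worlds, an accessibility relation and a valuation. -/
structure Kripke : Type 1 where
  W : Type
  nonempty : Nonempty W
  R : W → W → Prop
  V : ℕ → Set W

/-- Truth of an ML-formula at a world of a Kripke model. -/
def ML.sat (M : Kripke) : M.W → ML → Prop
  | _, .top => True
  | w, .var p => w ∈ M.V p
  | w, .and φ ψ => ML.sat M w φ ∧ ML.sat M w ψ
  | w, .not φ => ¬ ML.sat M w φ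
  | w, .dia φ => ∃ v, M.R w v ∧ ML.sat M v φ

/-- A formula is valid if it is true at every world of every Kripke model. -/
def ML.valid (φ : ML) : Prop := ∀ (M : Kripke) (w : M.W), ML.sat M w φ

/-- A normal modal logic: a set of ML-formulas containing all valid formulas and
closed under modus ponens, necessitation and uniform substitution. -/
structure NormalLogic : Type 1 where
  F : Set ML
  valid_mem : ∀ φ : ML, φ.valid → φ ∈ F
  mp : ∀ φ ψ : ML, ML.impl φ ψ ∈ F → φ ∈ F → ψ ∈ F
  nec : ∀ φ : ML, φ ∈ F → φ.box ∈ F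
  subst : ∀ (φ : ML) (s : ℕ → ML), φ ∈ F → φ.subst s ∈ F

/-- `M` is a model for the logic `L`: every formula of `L` is true at every world of `M`. -/
def Kripke.IsModelFor (M : Kripke) (L : NormalLogic) : Prop :=
  ∀ φ ∈ L.F, ∀ w : M.W, ML.sat M w φ

/-- Local consequence over the models for `L`. -/
def NormalLogic.entails (L : NormalLogic) (φ ψ : ML) : Prop :=
  ∀ M : Kripke, M.IsModelFor L → ∀ w : M.W, ML.sat M w φ → ML.sat M w ψ

/-- An `L`-interpolant for `φ` and `ψ`. -/
def NormalLogic.Interpolant (L : NormalLogic) (φ ψ χ : ML) : Prop :=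
  χ.sig ⊆ φ.sig ∩ ψ.sig ∧ L.entails φ χ ∧ L.entails χ ψ

/-- `β` is a `σ`-bisimulation between the Kripke models `M₁` and `M₂`. -/
def IsBisimulation (σ : Set ℕ) (M₁ M₂ : Kripke) (β : M₁.W → M₂.W → Prop) : Prop :=
  ∀ u₁ u₂, β u₁ u₂ →
    (∀ p ∈ σ, (u₁ ∈ M₁.V p ↔ u₂ ∈ M₂.V p)) ∧
    (∀ v₁, M₁.R u₁ v₁ → ∃ v₂, M₂.R u₂ v₂ ∧ β v₁ v₂) ∧
    (∀ v₂, M₂.R u₂ v₂ → ∃ v₁, M₁.R u₁ v₁ ∧ β v₁ v₂)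

/-- `M₁,w₁ ∼_{ML(σ)} M₂,w₂`: some `σ`-bisimulation relates `w₁` to `w₂`. -/
def Bisimilar (σ : Set ℕ) (M₁ M₂ : Kripke) (w₁ : M₁.W) (w₂ : M₂.W) : Prop :=
  ∃ β : M₁.W → M₂.W → Prop, IsBisimulation σ M₁ M₂ β ∧ β w₁ w₂


namespace Interp

open Filter

noncomputable instance : DecidableEq ML := Classical.decEq ML

/-! ### Countability of ML -/

def mlcode : ML → ℕ
  | .top => 0
  | .var p => 5 * p + 1
  | .and f g => 5 * (Nat.pair (mlcode f) (mlcode g)) + 2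
  | .not f => 5 * (mlcode f) + 3
  | .dia f => 5 * (mlcode f) + 4

theorem mlcode_inj : ∀ a b : ML, mlcode a = mlcode b → a = b := by
  intro a
  induction a with
  | top => intro b h; cases b <;> simp only [mlcode] at h <;> first | rfl | omega
  | var p =>
      intro b h; cases b <;> simp only [mlcode] at h
      case var q => have : p = q := by omega
                    rw [this]
      all_goals omega
  | and f g ihf ihg =>
      intro b h; cases b <;> simp only [mlcode] at h
      case and f' g' =>
        have hp : Nat.pair (mlcode f) (mlcode g) = Nat.pair (mlcode f') (mlcode g') := by
          omega
        rw [Nat.pair_eq_pair] at hp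
        rw [ihf _ hp.1, ihg _ hp.2]
      all_goals omega
  | not f ihf =>
      intro b h; cases b <;> simp only [mlcode] at h
      case not f' => rw [ihf f' (by omega)]
      all_goals omega
  | dia f ihf =>
      intro b h; cases b <;> simp only [mlcode] at h
      case dia f' => rw [ihf f' (by omega)]
      all_goals omega

instance : Countable ML := ⟨mlcode, fun _ _ h => mlcode_inj _ _ h⟩

/-! ### unfolding lemmas for sat -/

theorem sat_and {M : Kripke} {w : M.W} {f g : ML} :
    ML.sat M w (.and f g) ↔ ML.sat M w f ∧ ML.sat M w g := Iff.rfl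

theorem sat_not {M : Kripke} {w : M.W} {f : ML} :
    ML.sat M w (.not f) ↔ ¬ ML.sat M w f := Iff.rfl

theorem sat_dia {M : Kripke} {w : M.W} {f : ML} :
    ML.sat M w (.dia f) ↔ ∃ v, M.R w v ∧ ML.sat M v f := Iff.rfl

theorem sat_top {M : Kripke} {w : M.W} : ML.sat M w .top := trivial

/-! ### Finite conjunctions -/

def conjList : List ML → ML
  | [] => .top
  | χ :: l => .and χ (conjList l)

theorem sat_conjList (M : Kripke) (w : M.W) :
    ∀ l : List ML, ML.sat M w (conjList l) ↔ ∀ χ ∈ l, ML.sat M w χ := by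
  intro l
  induction l with
  | nil => simp [conjList, sat_top]
  | cons χ l ih => simp [conjList, sat_and, ih]

theorem sig_conjList (σ : Set ℕ) :
    ∀ l : List ML, (∀ χ ∈ l, ML.sig χ ⊆ σ) → ML.sig (conjList l) ⊆ σ := by
  intro l
  induction l with
  | nil => simp [conjList, ML.sig]
  | cons χ l ih =>
      intro h
      simp only [conjList, ML.sig, Set.union_subset_iff]
      exact ⟨h χ (by simp), ih fun x hx => h x (by simp [hx])⟩

/-- conjunction of `f 0, …, f n` -/
def conjN (f : ℕ → ML) (n : ℕ) : ML := conjList ((List.range (n+1)).map f)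

theorem sat_conjN {M : Kripke} {w : M.W} {f : ℕ → ML} {n : ℕ} :
    ML.sat M w (conjN f n) ↔ ∀ k ≤ n, ML.sat M w (f k) := by
  rw [conjN, sat_conjList]
  constructor
  · intro h k hk
    exact h (f k) (List.mem_map_of_mem (f := f) (List.mem_range.mpr (by omega)))
  · intro h χ hχ
    simp only [List.mem_map, List.mem_range] at hχ
    obtain ⟨k, hk, rfl⟩ := hχ
    exact h k (by omega)

theorem sig_conjN {σ : Set ℕ} {f : ℕ → ML} (hf : ∀ k, ML.sig (f k) ⊆ σ) (n : ℕ) :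
    ML.sig (conjN f n) ⊆ σ := by
  apply sig_conjList
  intro χ hχ
  simp only [List.mem_map, List.mem_range] at hχ
  obtain ⟨k, _, rfl⟩ := hχ
  exact hf k

/-! ### Ultraproducts of Kripke models -/

theorem tail_mem_U (k : ℕ) : ∀ᶠ n in (Filter.hyperfilter ℕ : Filter ℕ), k ≤ n := by
  apply Filter.le_def.mp (Filter.hyperfilter_le_cofinite)
  rw [Filter.mem_cofinite]
  exact Set.Finite.subset (Set.finite_Iio k)
    (by intro x hx; simp only [Set.mem_compl_iff, Set.mem_setOf_eq, not_le] at hx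
        exact hx)

noncomputable def UProd (M : ℕ → Kripke) : Kripke where
  W := ∀ i, (M i).W
  nonempty := ⟨fun i => Classical.choice (M i).nonempty⟩
  R w v := ∀ᶠ i in (Filter.hyperfilter ℕ : Filter ℕ), (M i).R (w i) (v i)
  V p := {w | ∀ᶠ i in (Filter.hyperfilter ℕ : Filter ℕ), w i ∈ (M i).V p}

theorem los (M : ℕ → Kripke) :
    ∀ (χ : ML) (w : (UProd M).W),
      ML.sat (UProd M) w χ ↔
        ∀ᶠ i in (Filter.hyperfilter ℕ : Filter ℕ), ML.sat (M i) (w i) χ := by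
  intro χ
  induction χ with
  | top => intro w; simp [sat_top, ML.sat]
  | var p => intro w; exact Iff.rfl
  | and f g ihf ihg =>
      intro w
      simp only [sat_and, ihf, ihg, Filter.eventually_and]
  | not f ihf =>
      intro w
      simp only [sat_not, ihf]
      exact Iff.symm Ultrafilter.eventually_not
  | dia f ihf =>
      intro w
      constructor
      · rintro ⟨v, hR, hs⟩
        rw [ihf] at hs
        filter_upwards [hR, hs] with i h1 h2
        exact ⟨v i, h1, h2⟩
      · intro h
        classical
        have pick : ∀ i, ∃ u : (M i).W,
            (∃ u, (M i).R (w i) u ∧ ML.sat (M i) u f) →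
              ((M i).R (w i) u ∧ ML.sat (M i) u f) := by
          intro i
          by_cases hi : ∃ u, (M i).R (w i) u ∧ ML.sat (M i) u f
          · obtain ⟨u, hu⟩ := hi; exact ⟨u, fun _ => hu⟩
          · exact ⟨Classical.choice (M i).nonempty, fun h' => absurd h' hi⟩
        choose v hv using pick
        refine ⟨v, ?_, ?_⟩
        · filter_upwards [h] with i hi; exact (hv i hi).1
        · refine (ihf _).mpr ?_; filter_upwards [h] with i hi; exact (hv i hi).2

theorem uprod_model (L : NormalLogic) (M : ℕ → Kripke)
    (h : ∀ i, (M i).IsModelFor L) : (UProd M).IsModelFor L := by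
  intro χ hχ w
  rw [los]
  exact Filter.Eventually.of_forall fun i => h i χ hχ (w i)

/-- Łoś for a constant family (diagonal). -/
theorem los_const (M : Kripke) (χ : ML) (w : M.W) :
    ML.sat (UProd fun _ => M) (fun _ => w) χ ↔ ML.sat M w χ := by
  refine (los _ χ _).trans ?_
  exact Filter.eventually_const

/-! ### Compactness -/

theorem compactness (L : NormalLogic) (S : Set ML) (hne : S.Nonempty)
    (h : ∀ l : List ML, (∀ χ ∈ l, χ ∈ S) →
      ∃ (M : Kripke) (w : M.W), M.IsModelFor L ∧ ∀ χ ∈ l, ML.sat M w χ) :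
    ∃ (M : Kripke) (w : M.W), M.IsModelFor L ∧ ∀ χ ∈ S, ML.sat M w χ := by
  obtain ⟨f, hf⟩ := (Set.to_countable S).exists_eq_range hne
  have hfin : ∀ n : ℕ, ∃ (M : Kripke) (w : M.W),
      M.IsModelFor L ∧ ∀ k ≤ n, ML.sat M w (f k) := by
    intro n
    obtain ⟨M, w, hM, hw⟩ := h ((List.range (n+1)).map f)
      (by intro χ hχ
          simp only [List.mem_map, List.mem_range] at hχ
          obtain ⟨k, _, rfl⟩ := hχ
          rw [hf]; exact Set.mem_range_self k)
    exact ⟨M, w, hM, fun k hk => hw (f k)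
      (List.mem_map_of_mem (f := f) (List.mem_range.mpr (by omega)))⟩
  choose M w hM hw using hfin
  refine ⟨UProd M, fun n => w n, uprod_model L M hM, ?_⟩
  intro χ hχ
  rw [hf] at hχ
  obtain ⟨k, rfl⟩ := hχ
  refine (los M (f k) _).mpr ?_
  filter_upwards [tail_mem_U k] with n hn
  exact hw n k hn

/-! ### Saturation -/

def SatProp (M : Kripke) : Prop :=
  ∀ (w : M.W) (f : ℕ → ML),
    (∀ n : ℕ, ∃ v, M.R w v ∧ ∀ k ≤ n, ML.sat M v (f k)) →
    ∃ v, M.R w v ∧ ∀ k, ML.sat M v (f k)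

theorem uprod_satProp (M : ℕ → Kripke) : SatProp (UProd M) := by
  classical
  intro w f h
  have hA : ∀ n, ∀ᶠ i in (Filter.hyperfilter ℕ : Filter ℕ),
      ML.sat (M i) (w i) (ML.dia (conjN f n)) := by
    intro n
    obtain ⟨v, hR, hv⟩ := h n
    have : ML.sat (UProd M) w (ML.dia (conjN f n)) :=
      ⟨v, hR, sat_conjN.mpr hv⟩
    rw [los] at this
    exact this
  set B : ℕ → Set ℕ := fun n =>
    {i | n ≤ i ∧ ∀ m ≤ n, ML.sat (M i) (w i) (ML.dia (conjN f m))} with hB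
  have hBmem : ∀ n, ∀ᶠ i in (Filter.hyperfilter ℕ : Filter ℕ), i ∈ B n := by
    intro n
    have h1 : ∀ᶠ i in (Filter.hyperfilter ℕ : Filter ℕ),
        ∀ m ≤ n, ML.sat (M i) (w i) (ML.dia (conjN f m)) := by
      induction n with
      | zero =>
          filter_upwards [hA 0] with i hi m hm
          have : m = 0 := Nat.le_zero.mp hm
          rw [this]; exact hi
      | succ n ih =>
          filter_upwards [ih, hA (n+1)] with i h1 h2 m hm
          by_cases hmn : m ≤ n
          · exact h1 m hmn
          · have : m = n + 1 := by omega
            rw [this]; exact h2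
    filter_upwards [tail_mem_U n, h1] with i hi1 hi2
    exact ⟨hi1, hi2⟩
  have hBsub : ∀ {m n : ℕ}, m ≤ n → B n ⊆ B m := by
    intro m n hmn i hi
    exact ⟨le_trans hmn hi.1, fun k hk => hi.2 k (le_trans hk hmn)⟩
  -- greatest level at which i belongs to B
  set N : ℕ → ℕ := fun i => Nat.findGreatest (fun n => i ∈ B n) i with hN
  have hex : ∀ i, i ∈ B (N i) →
      ∃ u, (M i).R (w i) u ∧ ML.sat (M i) u (conjN f (N i)) := by
    intro i hi
    exact hi.2 (N i) le_rfl
  set v : ∀ i, (M i).W := fun i =>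
    if hi : i ∈ B (N i) then Classical.choose (hex i hi)
    else Classical.choice (M i).nonempty with hv
  have key : ∀ k : ℕ, ∀ i ∈ B k,
      (M i).R (w i) (v i) ∧ ML.sat (M i) (v i) (f k) := by
    intro k i hik
    have hki : k ≤ i := hik.1
    have hNi : i ∈ B (N i) :=
      Nat.findGreatest_spec (P := fun n => i ∈ B n) hki hik
    have hkN : k ≤ N i :=
      Nat.le_findGreatest (P := fun n => i ∈ B n) hki hik
    have hvdef : v i = Classical.choose (hex i hNi) := by
      rw [hv]; exact dif_pos hNi
    have hspec := Classical.choose_spec (hex i hNi)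
    rw [← hvdef] at hspec
    exact ⟨hspec.1, sat_conjN.mp hspec.2 k hkN⟩
  refine ⟨v, ?_, ?_⟩
  · filter_upwards [hBmem 0] with i hi
    exact (key 0 i hi).1
  · intro k
    refine (los M (f k) _).mpr ?_
    filter_upwards [hBmem k] with i hi
    exact (key k i hi).2

theorem uprod_const_satProp (M : Kripke) : SatProp (UProd fun _ => M) :=
  uprod_satProp _

/-! ### Bisimulation invariance -/

theorem bisim_invariance {σ : Set ℕ} {M₁ M₂ : Kripke} {β : M₁.W → M₂.W → Prop}
    (hβ : IsBisimulation σ M₁ M₂ β) :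
    ∀ χ : ML, χ.sig ⊆ σ → ∀ u₁ u₂, β u₁ u₂ →
      (ML.sat M₁ u₁ χ ↔ ML.sat M₂ u₂ χ) := by
  intro χ
  induction χ with
  | top => intro _ u₁ u₂ _; simp [sat_top, ML.sat]
  | var p =>
      intro hsig u₁ u₂ hu
      exact (hβ u₁ u₂ hu).1 p (hsig (by simp [ML.sig]))
  | and f g ihf ihg =>
      intro hsig u₁ u₂ hu
      have hf : f.sig ⊆ σ := fun x hx => hsig (Set.mem_union_left _ hx)
      have hg : g.sig ⊆ σ := fun x hx => hsig (Set.mem_union_right _ hx)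
      simp only [sat_and, ihf hf u₁ u₂ hu, ihg hg u₁ u₂ hu]
  | not f ihf =>
      intro hsig u₁ u₂ hu
      simp only [sat_not, ihf hsig u₁ u₂ hu]
  | dia f ihf =>
      intro hsig u₁ u₂ hu
      constructor
      · rintro ⟨v₁, hR, hs⟩
        obtain ⟨v₂, hR₂, hb⟩ := (hβ u₁ u₂ hu).2.1 v₁ hR
        exact ⟨v₂, hR₂, (ihf hsig v₁ v₂ hb).mp hs⟩
      · rintro ⟨v₂, hR, hs⟩
        obtain ⟨v₁, hR₁, hb⟩ := (hβ u₁ u₂ hu).2.2 v₂ hR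
        exact ⟨v₁, hR₁, (ihf hsig v₁ v₂ hb).mpr hs⟩

/-! ### Hennessy–Milner -/

theorem hennessy_milner (σ : Set ℕ) (M₁ M₂ : Kripke)
    (h1 : SatProp M₁) (h2 : SatProp M₂) :
    IsBisimulation σ M₁ M₂
      (fun u₁ u₂ => ∀ χ : ML, χ.sig ⊆ σ → (ML.sat M₁ u₁ χ ↔ ML.sat M₂ u₂ χ)) := by
  intro u₁ u₂ hu
  refine ⟨fun p hp => hu (.var p) (by simp [ML.sig, hp]), ?_, ?_⟩
  · -- forth
    intro v₁ hR
    have hSne : (ML.top : ML) ∈ {χ : ML | χ.sig ⊆ σ ∧ ML.sat M₁ v₁ χ} :=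
      ⟨by simp [ML.sig], sat_top⟩
    obtain ⟨f, hf⟩ := (Set.to_countable _).exists_eq_range ⟨_, hSne⟩
    have hfmem : ∀ k, (f k).sig ⊆ σ ∧ ML.sat M₁ v₁ (f k) := by
      intro k
      have : f k ∈ {χ : ML | χ.sig ⊆ σ ∧ ML.sat M₁ v₁ χ} := by
        rw [hf]; exact Set.mem_range_self k
      exact this
    have hpre : ∀ n : ℕ, ∃ v, M₂.R u₂ v ∧ ∀ k ≤ n, ML.sat M₂ v (f k) := by
      intro n
      have hsig : (ML.dia (conjN f n)).sig ⊆ σ := sig_conjN (fun k => (hfmem k).1) n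
      have hs1 : ML.sat M₁ u₁ (ML.dia (conjN f n)) :=
        ⟨v₁, hR, sat_conjN.mpr fun k _ => (hfmem k).2⟩
      obtain ⟨v, hRv, hsv⟩ := (hu _ hsig).mp hs1
      exact ⟨v, hRv, sat_conjN.mp hsv⟩
    obtain ⟨v₂, hR₂, hall⟩ := h2 u₂ f hpre
    refine ⟨v₂, hR₂, ?_⟩
    intro χ hsig
    constructor
    · intro hs
      have : χ ∈ Set.range f := by rw [← hf]; exact ⟨hsig, hs⟩
      obtain ⟨k, rfl⟩ := this
      exact hall k
    · intro hs
      by_contra hns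
      have : (ML.not χ) ∈ Set.range f := by rw [← hf]; exact ⟨hsig, hns⟩
      obtain ⟨k, hk⟩ := this
      have := hall k
      rw [hk] at this
      exact this hs
  · -- back
    intro v₂ hR
    have hSne : (ML.top : ML) ∈ {χ : ML | χ.sig ⊆ σ ∧ ML.sat M₂ v₂ χ} :=
      ⟨by simp [ML.sig], sat_top⟩
    obtain ⟨f, hf⟩ := (Set.to_countable _).exists_eq_range ⟨_, hSne⟩
    have hfmem : ∀ k, (f k).sig ⊆ σ ∧ ML.sat M₂ v₂ (f k) := by
      intro k
      have : f k ∈ {χ : ML | χ.sig ⊆ σ ∧ ML.sat M₂ v₂ χ} := by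
        rw [hf]; exact Set.mem_range_self k
      exact this
    have hpre : ∀ n : ℕ, ∃ v, M₁.R u₁ v ∧ ∀ k ≤ n, ML.sat M₁ v (f k) := by
      intro n
      have hsig : (ML.dia (conjN f n)).sig ⊆ σ := sig_conjN (fun k => (hfmem k).1) n
      have hs2 : ML.sat M₂ u₂ (ML.dia (conjN f n)) :=
        ⟨v₂, hR, sat_conjN.mpr fun k _ => (hfmem k).2⟩
      obtain ⟨v, hRv, hsv⟩ := (hu _ hsig).mpr hs2
      exact ⟨v, hRv, sat_conjN.mp hsv⟩
    obtain ⟨v₁, hR₁, hall⟩ := h1 u₁ f hpre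
    refine ⟨v₁, hR₁, ?_⟩
    intro χ hsig
    constructor
    · intro hs
      by_contra hns
      have : (ML.not χ) ∈ Set.range f := by rw [← hf]; exact ⟨hsig, hns⟩
      obtain ⟨k, hk⟩ := this
      have h' := hall k
      rw [hk] at h'
      exact h' hs
    · intro hs
      have : χ ∈ Set.range f := by rw [← hf]; exact ⟨hsig, hs⟩
      obtain ⟨k, rfl⟩ := this
      exact hall k

end Interp

theorem interpolant_existence_criterion_bisimulation
    (L : NormalLogic) (φ ψ : ML) (σ : Set ℕ) (hσ : σ = φ.sig ∩ ψ.sig) :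
    (¬ ∃ χ : ML, L.Interpolant φ ψ χ) ↔
      ∃ (M₁ M₂ : Kripke) (w₁ : M₁.W) (w₂ : M₂.W),
        M₁.IsModelFor L ∧ M₂.IsModelFor L ∧
        ML.sat M₁ w₁ φ ∧ ¬ ML.sat M₂ w₂ ψ ∧
        Bisimilar σ M₁ M₂ w₁ w₂ := by
  classical
  open Interp in
  constructor
  · -- hard direction
    intro hni
    set Φ : Set ML := {χ | χ.sig ⊆ σ ∧ L.entails φ χ} with hΦ
    -- Step A: a model of L satisfying Φ ∪ {¬ψ}
    have stepA : ∃ (M : Kripke) (w : M.W), M.IsModelFor L ∧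
        ∀ χ ∈ insert (ML.not ψ) Φ, ML.sat M w χ := by
      apply compactness L _ ⟨_, Set.mem_insert (ML.not ψ) Φ⟩
      intro l hl
      by_contra hcon
      push_neg at hcon
      set l' : List ML := l.filter (fun χ => χ ≠ ML.not ψ) with hl'
      have hl'mem : ∀ χ ∈ l', χ ∈ Φ := by
        intro χ hχ
        rw [hl', List.mem_filter] at hχ
        have h1 := hl χ hχ.1
        have h2 : χ ≠ ML.not ψ := by simpa using hχ.2
        rcases Set.mem_insert_iff.mp h1 with h | h
        · exact absurd h h2
        · exact h
      set c : ML := conjList l' with hcc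
      have hsigc : c.sig ⊆ σ := sig_conjList σ l' fun χ hχ => (hl'mem χ hχ).1
      have hent1 : L.entails φ c := by
        intro M hM w hw
        rw [hcc, sat_conjList]
        intro χ hχ
        exact (hl'mem χ hχ).2 M hM w hw
      have hent2 : L.entails c ψ := by
        intro M hM w hw
        by_contra hnψ
        obtain ⟨χ0, hχ0l, hχ0⟩ := hcon M w hM
        apply hχ0
        by_cases hne : χ0 = ML.not ψ
        · rw [hne]; exact hnψ
        · exact (sat_conjList M w l').mp hw χ0
            (by rw [hl', List.mem_filter]; exact ⟨hχ0l, by simpa using hne⟩)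
      exact hni ⟨c, by rw [← hσ]; exact hsigc, hent1, hent2⟩
    obtain ⟨M₂, w₂, hM₂, hsat₂⟩ := stepA
    have hnψ : ¬ ML.sat M₂ w₂ ψ := hsat₂ (ML.not ψ) (Set.mem_insert _ _)
    have hΦsat : ∀ χ ∈ Φ, ML.sat M₂ w₂ χ := fun χ hχ =>
      hsat₂ χ (Set.mem_insert_of_mem _ hχ)
    -- Step B: a model of L satisfying {φ} ∪ T where T is the σ-theory of w₂
    set T : Set ML := {χ | χ.sig ⊆ σ ∧ ML.sat M₂ w₂ χ} with hT
    have stepB : ∃ (M : Kripke) (w : M.W), M.IsModelFor L ∧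
        ∀ χ ∈ insert φ T, ML.sat M w χ := by
      apply compactness L _ ⟨_, Set.mem_insert φ T⟩
      intro l hl
      by_contra hcon
      push_neg at hcon
      set l' : List ML := l.filter (fun χ => χ ≠ φ) with hl'
      have hl'mem : ∀ χ ∈ l', χ ∈ T := by
        intro χ hχ
        rw [hl', List.mem_filter] at hχ
        have h1 := hl χ hχ.1
        have h2 : χ ≠ φ := by simpa using hχ.2
        rcases Set.mem_insert_iff.mp h1 with h | h
        · exact absurd h h2
        · exact h
      set c : ML := conjList l' with hcc
      have hsigc : c.sig ⊆ σ := sig_conjList σ l' fun χ hχ => (hl'mem χ hχ).1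
      have hentnc : L.entails φ (ML.not c) := by
        intro M hM w hw
        rw [sat_not]
        intro hcw
        obtain ⟨χ0, hχ0l, hχ0⟩ := hcon M w hM
        apply hχ0
        by_cases hne : χ0 = φ
        · rw [hne]; exact hw
        · exact (sat_conjList M w l').mp hcw χ0
            (by rw [hl', List.mem_filter]; exact ⟨hχ0l, by simpa using hne⟩)
      have hncΦ : (ML.not c) ∈ Φ := ⟨hsigc, hentnc⟩
      have h1 : ML.sat M₂ w₂ (ML.not c) := hΦsat _ hncΦ
      have h2 : ML.sat M₂ w₂ c := by
        rw [hcc, sat_conjList]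
        intro χ hχ
        exact (hl'mem χ hχ).2
      exact h1 h2
    obtain ⟨M₁, w₁, hM₁, hsat₁⟩ := stepB
    have hφ₁ : ML.sat M₁ w₁ φ := hsat₁ φ (Set.mem_insert _ _)
    have hTsat : ∀ χ ∈ T, ML.sat M₁ w₁ χ := fun χ hχ =>
      hsat₁ χ (Set.mem_insert_of_mem _ hχ)
    have hequiv : ∀ χ : ML, χ.sig ⊆ σ → (ML.sat M₁ w₁ χ ↔ ML.sat M₂ w₂ χ) := by
      intro χ hsig
      constructor
      · intro hs
        by_contra hns
        exact hTsat (ML.not χ) ⟨hsig, hns⟩ hs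
      · intro hs
        exact hTsat χ ⟨hsig, hs⟩
    -- Step C: pass to saturated ultrapowers
    refine ⟨UProd (fun _ => M₁), UProd (fun _ => M₂), (fun _ => w₁), (fun _ => w₂),
      uprod_model L _ (fun _ => hM₁), uprod_model L _ (fun _ => hM₂),
      (los_const M₁ φ w₁).mpr hφ₁,
      fun hc => hnψ ((los_const M₂ ψ w₂).mp hc), ?_⟩
    refine ⟨fun u₁ u₂ => ∀ χ : ML, χ.sig ⊆ σ →
        (ML.sat (UProd fun _ => M₁) u₁ χ ↔ ML.sat (UProd fun _ => M₂) u₂ χ),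
      hennessy_milner σ _ _ (uprod_satProp _) (uprod_satProp _), ?_⟩
    intro χ hsig
    rw [los_const, los_const]
    exact hequiv χ hsig
  · -- easy direction
    rintro ⟨M₁, M₂, w₁, w₂, hM₁, hM₂, hφ, hψ, β, hβ, hw⟩ ⟨χ, hsig, h1, h2⟩
    have hσχ : χ.sig ⊆ σ := by rw [hσ]; exact hsig
    have hs1 : ML.sat M₁ w₁ χ := h1 M₁ hM₁ w₁ hφ
    have hs2 : ML.sat M₂ w₂ χ := (bisim_invariance hβ χ hσχ w₁ w₂ hw).mp hs1
    exact hψ (h2 M₂ hM₂ w₂ hs2)
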